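/- Let a<b be real numbers, let g:[a,b]→ℝ be a bounded càdlàg function and let f:[a,b]→ℝ be a càdlàg function of bounded variation. Then the deterministic forward integral ∫_{]a,b]} g(x) d⁻f(x) exists and equals the Lebesgue–Stieltjes integral ∫_{]a,b]} g(x−) df(x), where g(x−) denotes the left limit of g at x and df is the Lebesgue–Stieltjes measure associated with f. In particular, if g ≡ 1 then ∫_{]a,b]} g(x) d⁻f(x) = f(b) − f(a). -/

import Mathlib

open MeasureTheory Set Filter Topology

private lemma clamp_measurable {a b : ℝ} (hab : a < b) {g : ℝ → ℝ}
    (hg_right : ∀ x ∈ Set.Ico a b, ContinuousWithinAt g (Set.Ici x) x) :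
    Measurable (fun y : ℝ => g (max a (min y b))) := by
  set G : ℝ → ℝ := fun y => g (max a (min y b)) with hGdef
  have hφmono : Monotone fun y : ℝ => max a (min y b) :=
    fun u v h => max_le_max le_rfl (min_le_min h le_rfl)
  have hφcont : Continuous fun y : ℝ => max a (min y b) :=
    continuous_const.max (continuous_id.min continuous_const)
  have hrc : ∀ x : ℝ, ContinuousWithinAt G (Set.Ici x) x := by
    intro x
    rcases lt_or_ge x a with hx | hx
    · have hφx : max a (min x b) = a := by
        rw [min_eq_left (hx.le.trans hab.le), max_eq_left hx.le]
      have h1 : ContinuousWithinAt g (Set.Ici a) (max a (min x b)) := by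
        rw [hφx]; exact hg_right a ⟨le_rfl, hab⟩
      exact ContinuousWithinAt.comp (g := g) (f := fun y : ℝ => max a (min y b))
        (t := Set.Ici a) h1 hφcont.continuousWithinAt
        (fun y _ => Set.mem_Ici.2 (le_max_left _ _))
    · rcases lt_or_ge x b with hxb | hxb
      · have hφx : max a (min x b) = x := by
          rw [min_eq_left hxb.le, max_eq_right hx]
        have h1 : ContinuousWithinAt g (Set.Ici x) x := hg_right x ⟨hx, hxb⟩
        have h2 : Set.MapsTo (fun y : ℝ => max a (min y b)) (Set.Ici x) (Set.Ici x) := by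
          intro y hy
          have h3 := hφmono hy
          simp only at h3
          rw [hφx] at h3
          exact h3
        have h1' : ContinuousWithinAt g (Set.Ici x) (max a (min x b)) := by
          rw [hφx]; exact h1
        exact ContinuousWithinAt.comp (g := g) (f := fun y : ℝ => max a (min y b))
          (t := Set.Ici x) h1' hφcont.continuousWithinAt h2
      · have hconst : ∀ y ∈ Set.Ici x, G y = g b := by
          intro y hy
          have : min y b = b := min_eq_right (hxb.trans hy)
          simp only [hGdef, this, max_eq_right hab.le]
        have hx' : G x = g b := hconst x Set.self_mem_Ici
        exact (continuousWithinAt_const (b := g b)).congr hconst hx'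
  -- approximation from the right
  have hmeas : ∀ n : ℕ, Measurable fun x : ℝ =>
      G (((n : ℝ) + 1)⁻¹ * (⌈((n : ℝ) + 1) * x⌉ : ℤ)) := by
    intro n
    exact (measurable_of_countable fun k : ℤ => G (((n : ℝ) + 1)⁻¹ * (k : ℝ))).comp
      (Int.measurable_ceil.comp (measurable_id.const_mul _))
  have hlim : ∀ x : ℝ, Tendsto (fun n : ℕ =>
      G (((n : ℝ) + 1)⁻¹ * (⌈((n : ℝ) + 1) * x⌉ : ℤ))) atTop (𝓝 (G x)) := by
    intro x
    set c : ℕ → ℝ := fun n => ((n : ℝ) + 1)⁻¹ * (⌈((n : ℝ) + 1) * x⌉ : ℤ) with hc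
    have hpos : ∀ n : ℕ, (0 : ℝ) < (n : ℝ) + 1 := fun n => by positivity
    have hge : ∀ n, x ≤ c n := by
      intro n
      have h1 : ((n : ℝ) + 1) * x ≤ (⌈((n : ℝ) + 1) * x⌉ : ℝ) := Int.le_ceil _
      have h2 := mul_le_mul_of_nonneg_left h1 (inv_nonneg.2 (hpos n).le)
      calc x = ((n : ℝ) + 1)⁻¹ * (((n : ℝ) + 1) * x) := by
              field_simp
        _ ≤ c n := h2
    have hle : ∀ n, c n ≤ x + ((n : ℝ) + 1)⁻¹ := by
      intro n
      have h1 : (⌈((n : ℝ) + 1) * x⌉ : ℝ) ≤ ((n : ℝ) + 1) * x + 1 :=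
        (Int.ceil_lt_add_one _).le
      have h2 := mul_le_mul_of_nonneg_left h1 (inv_nonneg.2 (hpos n).le)
      calc c n ≤ ((n : ℝ) + 1)⁻¹ * (((n : ℝ) + 1) * x + 1) := h2
        _ = x + ((n : ℝ) + 1)⁻¹ := by field_simp
    have hinv : Tendsto (fun n : ℕ => ((n : ℝ) + 1)⁻¹) atTop (𝓝 0) := by
      exact Tendsto.congr (fun n => one_div _) tendsto_one_div_add_atTop_nhds_zero_nat
    have hub : Tendsto (fun n : ℕ => x + ((n : ℝ) + 1)⁻¹) atTop (𝓝 x) := by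
      simpa using tendsto_const_nhds.add hinv
    have hcx : Tendsto c atTop (𝓝 x) :=
      tendsto_of_tendsto_of_tendsto_of_le_of_le tendsto_const_nhds hub hge hle
    have hcx' : Tendsto c atTop (𝓝[Set.Ici x] x) :=
      tendsto_nhdsWithin_of_tendsto_nhds_of_eventually_within _ hcx
        (Eventually.of_forall hge)
    exact (hrc x).tendsto.comp hcx'
  exact measurable_of_tendsto_metrizable hmeas (tendsto_pi_nhds.2 hlim)


private lemma avg_tendsto {G : ℝ → ℝ} (hG : Measurable G) {a b M : ℝ} (hab : a < b)
    (hM : ∀ x ∈ Set.Icc a b, |G x| ≤ M) {y : ℝ} (hy : y ∈ Set.Ioc a b) {L : ℝ}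
    (hlim : Tendsto G (𝓝[<] y) (𝓝 L)) :
    Tendsto (fun ε : ℝ => ε⁻¹ * ∫ x in Set.Ioc a b ∩ Set.Ico (y - ε) y, G x)
      (𝓝[>] 0) (𝓝 L) := by
  have hya : 0 < y - a := sub_pos.2 hy.1
  have hmain : Tendsto (fun ε : ℝ => ε⁻¹ * ∫ x in Set.Ico (y - ε) y, G x)
      (𝓝[>] 0) (𝓝 L) := by
    rw [Metric.tendsto_nhdsWithin_nhds]
    intro δ hδ
    obtain ⟨η, hη, H⟩ := Metric.tendsto_nhdsWithin_nhds.1 hlim (δ / 2) (half_pos hδ)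
    refine ⟨min η (y - a), lt_min hη hya, ?_⟩
    intro ε hε hdist
    have hε0 : 0 < ε := hε
    have hεη : ε < η := by
      have := hdist
      rw [Real.dist_eq, sub_zero, abs_of_pos hε0] at this
      exact lt_of_lt_of_le this (min_le_left _ _)
    have hεa : ε < y - a := by
      have := hdist
      rw [Real.dist_eq, sub_zero, abs_of_pos hε0] at this
      exact lt_of_lt_of_le this (min_le_right _ _)
    have hsub : Set.Ico (y - ε) y ⊆ Set.Icc a b := by
      intro x hx
      constructor
      · linarith [hx.1]
      · linarith [hx.2, hy.2]
    have hvol : volume (Set.Ico (y - ε) y) = ENNReal.ofReal ε := by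
      rw [Real.volume_Ico]; congr 1; ring
    have hvfin : volume (Set.Ico (y - ε) y) < ⊤ := by
      rw [hvol]; exact ENNReal.ofReal_lt_top
    have hvtr : (volume (Set.Ico (y - ε) y)).toReal = ε := by
      rw [hvol, ENNReal.toReal_ofReal hε0.le]
    have hint : IntegrableOn G (Set.Ico (y - ε) y) volume := by
      refine Integrable.mono' (integrable_const M) hG.aestronglyMeasurable.restrict ?_
      filter_upwards [ae_restrict_mem measurableSet_Ico] with x hx
      simpa [Real.norm_eq_abs] using hM x (hsub hx)
    have hconst : ∫ _ in Set.Ico (y - ε) y, L ∂volume = ε * L := by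
      rw [setIntegral_const, measureReal_def, hvtr, smul_eq_mul]
    have hdiff : (∫ x in Set.Ico (y - ε) y, G x) - ε * L
        = ∫ x in Set.Ico (y - ε) y, (G x - L) := by
      rw [← hconst, ← integral_sub hint (integrableOn_const hvfin.ne)]
    have hbd : ‖∫ x in Set.Ico (y - ε) y, (G x - L)‖ ≤ δ / 2 * ε := by
      have := norm_setIntegral_le_of_norm_le_const (μ := volume) hvfin
        (f := fun x => G x - L) (C := δ / 2) ?_
      · rwa [measureReal_def, hvtr] at this
      · intro x hx
        have hxy : x < y := hx.2
        have hd : dist x y < η := by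
          rw [Real.dist_eq, abs_of_neg (by linarith : x - y < 0)]
          linarith [hx.1]
        have := H hxy hd
        rw [Real.dist_eq] at this
        exact (le_of_lt (by simpa [Real.norm_eq_abs] using this))
    rw [Real.dist_eq]
    have : (ε⁻¹ * ∫ x in Set.Ico (y - ε) y, G x) - L
        = ε⁻¹ * ((∫ x in Set.Ico (y - ε) y, G x) - ε * L) := by
      field_simp
    rw [this, hdiff, abs_mul, abs_of_pos (inv_pos.2 hε0)]
    calc ε⁻¹ * |∫ x in Set.Ico (y - ε) y, (G x - L)| ≤ ε⁻¹ * (δ / 2 * ε) := by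
          apply mul_le_mul_of_nonneg_left _ (inv_pos.2 hε0).le
          simpa [Real.norm_eq_abs] using hbd
      _ = δ / 2 := by field_simp
      _ < δ := half_lt_self hδ
  refine hmain.congr' ?_
  filter_upwards [Ioo_mem_nhdsGT_of_mem (Set.mem_Ico.2 ⟨le_rfl, hya⟩)] with ε hε
  have : Set.Ioc a b ∩ Set.Ico (y - ε) y = Set.Ico (y - ε) y := by
    apply Set.inter_eq_right.2
    intro x hx
    exact ⟨by linarith [hx.1, hε.2], by linarith [hx.2, hy.2]⟩
  rw [this]



private lemma key_tendsto (F : StieltjesFunction ℝ) {a b : ℝ} (hab : a < b)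
    {G L : ℝ → ℝ} (hG : Measurable G) {M : ℝ}
    (hM : ∀ x ∈ Set.Icc a b, |G x| ≤ M)
    (hlim : ∀ y ∈ Set.Ioc a b, Tendsto G (𝓝[<] y) (𝓝 (L y))) :
    Tendsto (fun ε : ℝ => ∫ x in Set.Ioc a b, G x * ((F (min (x + ε) b) - F x) / ε))
      (𝓝[>] 0) (𝓝 (∫ y in Set.Ioc a b, L y ∂F.measure)) := by
  have hM0 : 0 ≤ M := (abs_nonneg _).trans (hM b ⟨hab.le, le_rfl⟩)
  haveI hfin1 : IsFiniteMeasure (F.measure.restrict (Set.Ioc a b)) :=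
    ⟨by rw [Measure.restrict_apply_univ, F.measure_Ioc]; exact ENNReal.ofReal_lt_top⟩
  haveI hfin2 : IsFiniteMeasure (volume.restrict (Set.Ioc a b)) :=
    ⟨by rw [Measure.restrict_apply_univ, Real.volume_Ioc]; exact ENNReal.ofReal_lt_top⟩
  -- the two-variable function
  set f2 : ℝ → ℝ → ℝ → ℝ := fun ε x y =>
    G x * (Set.Ioc x (min (x + ε) b)).indicator (fun _ => (1 : ℝ)) y with hf2
  have hf2meas : ∀ ε : ℝ, Measurable (Function.uncurry (f2 ε)) := by
    intro ε
    have hS : MeasurableSet {q : ℝ × ℝ | q.1 < q.2 ∧ q.2 ≤ min (q.1 + ε) b} := by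
      apply MeasurableSet.inter
      · exact measurableSet_lt measurable_fst measurable_snd
      · exact measurableSet_le measurable_snd
          ((measurable_fst.add_const ε).min measurable_const)
    have : Function.uncurry (f2 ε) = fun p : ℝ × ℝ =>
        G p.1 * Set.indicator {q : ℝ × ℝ | q.1 < q.2 ∧ q.2 ≤ min (q.1 + ε) b}
          (fun _ => (1 : ℝ)) p := by
      ext p
      simp only [Function.uncurry, hf2, Set.indicator_apply, Set.mem_Ioc, Set.mem_setOf_eq]
    rw [this]
    exact (hG.comp measurable_fst).mul (measurable_const.indicator hS)
  have hf2int : ∀ ε : ℝ, Integrable (Function.uncurry (f2 ε))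
      ((volume.restrict (Set.Ioc a b)).prod (F.measure.restrict (Set.Ioc a b))) := by
    intro ε
    refine Integrable.mono' (integrable_const M) (hf2meas ε).aestronglyMeasurable ?_
    rw [Measure.prod_restrict]
    filter_upwards [ae_restrict_mem (measurableSet_Ioc.prod measurableSet_Ioc)] with p hp
    have hp1 : p.1 ∈ Set.Icc a b := ⟨hp.1.1.le, hp.1.2⟩
    have hind : |(Set.Ioc p.1 (min (p.1 + ε) b)).indicator (fun _ => (1 : ℝ)) p.2| ≤ 1 := by
      rw [Set.indicator_apply]
      split <;> simp
    calc ‖Function.uncurry (f2 ε) p‖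
        = |G p.1| * |(Set.Ioc p.1 (min (p.1 + ε) b)).indicator (fun _ => (1 : ℝ)) p.2| := by
          simp [Function.uncurry, hf2, abs_mul, Real.norm_eq_abs]
      _ ≤ M * 1 := mul_le_mul (hM p.1 hp1) hind (abs_nonneg _) hM0
      _ = M := mul_one M
  -- Fubini identity
  have claimA : ∀ ε : ℝ, 0 < ε →
      ∫ x in Set.Ioc a b, G x * ((F (min (x + ε) b) - F x) / ε)
        = ∫ y in Set.Ioc a b,
            ε⁻¹ * ∫ x in Set.Ioc a b ∩ Set.Ico (y - ε) y, G x ∂volume ∂F.measure := by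
    intro ε hε
    have step1 : ∫ x in Set.Ioc a b, G x * ((F (min (x + ε) b) - F x) / ε)
        = ε⁻¹ * ∫ x in Set.Ioc a b, G x * (F (min (x + ε) b) - F x) := by
      rw [← integral_const_mul]
      apply setIntegral_congr_fun measurableSet_Ioc
      intro x _
      ring
    have step2 : ∫ x in Set.Ioc a b, G x * (F (min (x + ε) b) - F x)
        = ∫ x in Set.Ioc a b, ∫ y in Set.Ioc a b, f2 ε x y ∂F.measure := by
      apply setIntegral_congr_fun measurableSet_Ioc
      intro x hx
      have hxm : x ≤ min (x + ε) b := le_min (by linarith) hx.2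
      have hsub : Set.Ioc x (min (x + ε) b) ⊆ Set.Ioc a b := fun z hz =>
        ⟨hx.1.trans hz.1, hz.2.trans (min_le_right _ _)⟩
      calc G x * (F (min (x + ε) b) - F x)
          = G x * (F.measure (Set.Ioc x (min (x + ε) b))).toReal := by
            rw [F.measure_Ioc, ENNReal.toReal_ofReal (sub_nonneg.2 (F.mono hxm))]
        _ = G x * ∫ _ in Set.Ioc x (min (x + ε) b), (1 : ℝ) ∂F.measure := by
            rw [setIntegral_const, smul_eq_mul, mul_one, measureReal_def]
        _ = G x * ∫ y in Set.Ioc a b,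
              (Set.Ioc x (min (x + ε) b)).indicator (fun _ => (1 : ℝ)) y ∂F.measure := by
            rw [setIntegral_indicator measurableSet_Ioc, Set.inter_eq_right.2 hsub]
        _ = ∫ y in Set.Ioc a b, f2 ε x y ∂F.measure := (integral_const_mul _ _).symm
    have step3 : ∫ x in Set.Ioc a b, ∫ y in Set.Ioc a b, f2 ε x y ∂F.measure
        = ∫ y in Set.Ioc a b, ∫ x in Set.Ioc a b, f2 ε x y ∂volume ∂F.measure :=
      integral_integral_swap (hf2int ε)
    have step4 : ∫ y in Set.Ioc a b, ∫ x in Set.Ioc a b, f2 ε x y ∂volume ∂F.measure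
        = ∫ y in Set.Ioc a b,
            ∫ x in Set.Ioc a b ∩ Set.Ico (y - ε) y, G x ∂volume ∂F.measure := by
      apply setIntegral_congr_fun measurableSet_Ioc
      intro y hy
      have hptw : ∀ x : ℝ, f2 ε x y = (Set.Ico (y - ε) y).indicator G x := by
        intro x
        have hiff : (x < y ∧ y ≤ min (x + ε) b) ↔ (y - ε ≤ x ∧ x < y) := by
          rw [le_min_iff]
          constructor
          · rintro ⟨h1, h2, _⟩; exact ⟨by linarith, h1⟩
          · rintro ⟨h1, h2⟩; exact ⟨h2, by linarith, hy.2⟩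
        simp only [hf2, Set.indicator_apply, Set.mem_Ioc, Set.mem_Ico, hiff]
        split <;> simp
      simp only [hptw]
      rw [setIntegral_indicator measurableSet_Ico]
    rw [step1, step2, step3, step4, ← integral_const_mul]
  -- dominated convergence
  have hDCT : Tendsto (fun ε : ℝ => ∫ y in Set.Ioc a b,
      ε⁻¹ * ∫ x in Set.Ioc a b ∩ Set.Ico (y - ε) y, G x ∂volume ∂F.measure)
      (𝓝[>] 0) (𝓝 (∫ y in Set.Ioc a b, L y ∂F.measure)) := by
    apply tendsto_integral_filter_of_dominated_convergence (fun _ => M)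
    · -- measurability
      filter_upwards [self_mem_nhdsWithin] with ε hε
      have h1 : Integrable (fun y => ∫ x, Function.uncurry (f2 ε) (x, y)
          ∂(volume.restrict (Set.Ioc a b))) (F.measure.restrict (Set.Ioc a b)) :=
        (hf2int ε).integral_prod_right
      have h2 : AEStronglyMeasurable
          (fun y => ∫ x in Set.Ioc a b ∩ Set.Ico (y - ε) y, G x ∂volume)
          (F.measure.restrict (Set.Ioc a b)) := by
        apply h1.aestronglyMeasurable.congr
        filter_upwards [ae_restrict_mem measurableSet_Ioc] with y hy
        have hptw : ∀ x : ℝ, f2 ε x y = (Set.Ico (y - ε) y).indicator G x := by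
          intro x
          have hiff : (x < y ∧ y ≤ min (x + ε) b) ↔ (y - ε ≤ x ∧ x < y) := by
            rw [le_min_iff]
            constructor
            · rintro ⟨h1, h2, _⟩; exact ⟨by linarith, h1⟩
            · rintro ⟨h1, h2⟩; exact ⟨h2, by linarith, hy.2⟩
          simp only [hf2, Set.indicator_apply, Set.mem_Ioc, Set.mem_Ico, hiff]
          split <;> simp
        simp only [Function.uncurry, hptw]
        rw [setIntegral_indicator measurableSet_Ico]
      exact h2.const_mul _
    · -- bound
      filter_upwards [self_mem_nhdsWithin] with ε hε
      have hε0 : (0 : ℝ) < ε := hε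
      filter_upwards [ae_restrict_mem measurableSet_Ioc] with y hy
      have hsfin : volume (Set.Ioc a b ∩ Set.Ico (y - ε) y) < ⊤ :=
        lt_of_le_of_lt (measure_mono Set.inter_subset_right)
          (by rw [Real.volume_Ico]; exact ENNReal.ofReal_lt_top)
      have hbd1 : ‖∫ x in Set.Ioc a b ∩ Set.Ico (y - ε) y, G x ∂volume‖
          ≤ M * (volume (Set.Ioc a b ∩ Set.Ico (y - ε) y)).toReal := by
        apply norm_setIntegral_le_of_norm_le_const hsfin
        intro x hx
        simpa [Real.norm_eq_abs] using hM x ⟨hx.1.1.le, hx.1.2⟩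
      have hvle : (volume (Set.Ioc a b ∩ Set.Ico (y - ε) y)).toReal ≤ ε := by
        apply ENNReal.toReal_le_of_le_ofReal hε0.le
        calc volume (Set.Ioc a b ∩ Set.Ico (y - ε) y)
            ≤ volume (Set.Ico (y - ε) y) := measure_mono Set.inter_subset_right
          _ = ENNReal.ofReal ε := by rw [Real.volume_Ico]; congr 1; ring
      calc ‖ε⁻¹ * ∫ x in Set.Ioc a b ∩ Set.Ico (y - ε) y, G x ∂volume‖
          = ε⁻¹ * ‖∫ x in Set.Ioc a b ∩ Set.Ico (y - ε) y, G x ∂volume‖ := by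
            rw [norm_mul, Real.norm_eq_abs, abs_of_pos (inv_pos.2 hε0)]
        _ ≤ ε⁻¹ * (M * ε) := by
            apply mul_le_mul_of_nonneg_left _ (inv_pos.2 hε0).le
            exact hbd1.trans (mul_le_mul_of_nonneg_left hvle hM0)
        _ = M := by field_simp
    · exact integrable_const M
    · filter_upwards [ae_restrict_mem measurableSet_Ioc] with y hy
      exact avg_tendsto hG hab hM hy (hlim y hy)
  refine hDCT.congr' ?_
  filter_upwards [self_mem_nhdsWithin] with ε hε
  exact (claimA ε hε).symm


/-- Let `a < b`, let `g : [a,b] → ℝ` be a bounded càdlàg function and let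
`f : [a,b] → ℝ` be a càdlàg function of bounded variation (encoded as the difference of two
Stieltjes functions `F₁ - F₂` on `[a,b]`; `dF := dF₁ - dF₂` is the associated
Lebesgue–Stieltjes measure).  Then the deterministic forward integral
`∫_{]a,b]} g(x) d⁻f(x)` exists and equals the Lebesgue–Stieltjes integral
`∫_{]a,b]} g(x−) df(x)`.  In particular, if `g ≡ 1`, this value is `f(b) - f(a)`. -/
theorem forward_integral_of_bounded_variation
    (a b : ℝ) (hab : a < b)
    (g : ℝ → ℝ)
    -- `g` is bounded on `[a,b]`
    (hg_bdd : ∃ M : ℝ, ∀ x ∈ Set.Icc a b, |g x| ≤ M)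
    -- `g` is càdlàg on `[a,b]` : right-continuous with left limits
    (hg_right : ∀ x ∈ Set.Ico a b, ContinuousWithinAt g (Set.Ici x) x)
    (hg_left : ∀ x ∈ Set.Ioc a b,
      Tendsto g (nhdsWithin x (Set.Iio x)) (nhds (Function.leftLim g x)))
    -- `f` is càdlàg of bounded variation on `[a,b]` : difference of two Stieltjes functions
    (F₁ F₂ : StieltjesFunction ℝ)
    (f : ℝ → ℝ)
    (hf : ∀ x ∈ Set.Icc a b, f x = F₁ x - F₂ x)
    -- the extension `f_J` of `f` to the real line
    (fJ : ℝ → ℝ)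
    (hfJ : ∀ x, fJ x = if x < a then f a else if b < x then f b else f x) :
    Tendsto
        (fun ε : ℝ => ∫ x in Set.Ioc a b, g x * ((fJ (x + ε) - fJ x) / ε))
        (𝓝[>] 0)
        (𝓝 ((∫ x in Set.Ioc a b, Function.leftLim g x ∂F₁.measure)
            - ∫ x in Set.Ioc a b, Function.leftLim g x ∂F₂.measure))
      ∧ ((∀ x, g x = 1) →
          (∫ x in Set.Ioc a b, Function.leftLim g x ∂F₁.measure)
            - (∫ x in Set.Ioc a b, Function.leftLim g x ∂F₂.measure) = f b - f a) := by
  obtain ⟨M, hMg⟩ := hg_bdd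
  have hM0 : 0 ≤ M := (abs_nonneg _).trans (hMg b ⟨hab.le, le_rfl⟩)
  set G : ℝ → ℝ := fun y => g (max a (min y b)) with hGdef
  have hGmeas : Measurable G := clamp_measurable hab hg_right
  have hGeq : ∀ x ∈ Set.Icc a b, G x = g x := by
    intro x hx
    simp only [hGdef]
    rw [min_eq_left hx.2, max_eq_right hx.1]
  have hGbd : ∀ x ∈ Set.Icc a b, |G x| ≤ M := fun x hx => by
    rw [hGeq x hx]; exact hMg x hx
  have hGlim : ∀ y ∈ Set.Ioc a b, Tendsto G (𝓝[<] y) (𝓝 (Function.leftLim g y)) := by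
    intro y hy
    refine Tendsto.congr' ?_ (hg_left y hy)
    filter_upwards [Ioo_mem_nhdsLT_of_mem (Set.mem_Ioc.2 ⟨hy.1, le_rfl⟩)] with z hz
    exact (hGeq z ⟨hz.1.le, hz.2.le.trans hy.2⟩).symm
  have h1 := key_tendsto F₁ hab hGmeas hGbd hGlim
  have h2 := key_tendsto F₂ hab hGmeas hGbd hGlim
  have hsub := h1.sub h2
  constructor
  · refine Tendsto.congr' ?_ hsub
    filter_upwards [self_mem_nhdsWithin] with ε hε
    have hε0 : (0 : ℝ) < ε := hε
    have hi : ∀ F : StieltjesFunction ℝ,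
        IntegrableOn (fun x => G x * ((F (min (x + ε) b) - F x) / ε))
          (Set.Ioc a b) volume := by
      intro F
      have hFmeas : Measurable fun x => G x * ((F (min (x + ε) b) - F x) / ε) :=
        hGmeas.mul (((F.mono.measurable.comp
          ((measurable_id.add_const ε).min measurable_const)).sub
          F.mono.measurable).div_const ε)
      refine Integrable.mono' (integrable_const (M * ((F b - F a) / ε)))
        hFmeas.aestronglyMeasurable.restrict ?_
      · filter_upwards [ae_restrict_mem measurableSet_Ioc] with x hx
        have hm1 : x ≤ min (x + ε) b := le_min (by linarith) hx.2
        have hm2 : min (x + ε) b ≤ b := min_le_right _ _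
        have h0 : 0 ≤ F (min (x + ε) b) - F x := sub_nonneg.2 (F.mono hm1)
        have hle : F (min (x + ε) b) - F x ≤ F b - F a :=
          sub_le_sub (F.mono hm2) (F.mono hx.1.le)
        rw [Real.norm_eq_abs, abs_mul]
        apply mul_le_mul (hGbd x ⟨hx.1.le, hx.2⟩) ?_ (abs_nonneg _) hM0
        rw [abs_of_nonneg (div_nonneg h0 hε0.le)]
        gcongr
    have heq : Set.EqOn (fun x => g x * ((fJ (x + ε) - fJ x) / ε))
        (fun x => G x * ((F₁ (min (x + ε) b) - F₁ x) / ε)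
          - G x * ((F₂ (min (x + ε) b) - F₂ x) / ε)) (Set.Ioc a b) := by
      intro x hx
      have hxI : x ∈ Set.Icc a b := ⟨hx.1.le, hx.2⟩
      have hm : min (x + ε) b ∈ Set.Icc a b :=
        ⟨le_min (by linarith [hx.1]) hab.le, min_le_right _ _⟩
      have hfJ1 : fJ (x + ε) = f (min (x + ε) b) := by
        rw [hfJ]
        rcases le_or_gt (x + ε) b with h | h
        · rw [if_neg (by linarith [hx.1] : ¬x + ε < a), if_neg (not_lt.2 h), min_eq_left h]
        · rw [if_neg (by linarith [hx.1] : ¬x + ε < a), if_pos h, min_eq_right h.le]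
      have hfJ2 : fJ x = f x := by
        rw [hfJ, if_neg (not_lt.2 hx.1.le), if_neg (not_lt.2 hx.2)]
      simp only
      rw [hfJ1, hfJ2, hf _ hm, hf _ hxI, ← hGeq x hxI]
      ring
    calc (∫ x in Set.Ioc a b, G x * ((F₁ (min (x + ε) b) - F₁ x) / ε))
          - ∫ x in Set.Ioc a b, G x * ((F₂ (min (x + ε) b) - F₂ x) / ε)
        = ∫ x in Set.Ioc a b, (G x * ((F₁ (min (x + ε) b) - F₁ x) / ε)
            - G x * ((F₂ (min (x + ε) b) - F₂ x) / ε)) := (integral_sub (hi F₁) (hi F₂)).symm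
      _ = ∫ x in Set.Ioc a b, g x * ((fJ (x + ε) - fJ x) / ε) :=
          (setIntegral_congr_fun measurableSet_Ioc heq).symm
  · intro hg1
    have hL : ∀ y : ℝ, Function.leftLim g y = 1 := by
      intro y
      have hgc : g = fun _ => (1 : ℝ) := funext hg1
      rw [hgc]
      exact leftLim_eq_of_tendsto tendsto_const_nhds
    simp only [hL]
    rw [setIntegral_const, setIntegral_const, measureReal_def, measureReal_def, F₁.measure_Ioc, F₂.measure_Ioc,
      ENNReal.toReal_ofReal (sub_nonneg.2 (F₁.mono hab.le)),
      ENNReal.toReal_ofReal (sub_nonneg.2 (F₂.mono hab.le)), smul_eq_mul, smul_eq_mul,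
      mul_one, mul_one, hf b ⟨hab.le, le_rfl⟩, hf a ⟨le_rfl, hab.le⟩]
    ring
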